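/- Let E : ℝⁿ × ℝᵖ → ℝ be twice continuously differentiable, ℓ : ℝⁿ → ℝ twice continuously differentiable, and suppose for each nudging strength β in a neighborhood of 0 there is a continuously differentiable family s_β ∈ ℝⁿ solving the nudged stationarity condition ∇ₛE(s_β, θ) + β∇ℓ(s_β) = 0, with ∇²ₛE(s₀, θ) invertible. Then the derivative λ := d/dβ s_β |_{β=0} satisfies the adjoint equation ∇ℓ(s₀) + ∇²ₛE(s₀, θ) · λ = 0, and consequently λ = −(∇²ₛE(s₀, θ))⁻¹ ∇ℓ(s₀). -/

import Mathlib

open scoped RealInnerProductSpace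

noncomputable section

abbrev Euc (n : ℕ) := EuclideanSpace ℝ (Fin n)

lemma contDiff_gradient_aux {n : ℕ} {f : Euc n → ℝ} (hf : ContDiff ℝ 2 f) :
    ContDiff ℝ 1 (gradient f) := by
  have h1 : ContDiff ℝ 1 (fderiv ℝ f) := hf.fderiv_right (by norm_num)
  have h2 : gradient f = fun x =>
      (InnerProductSpace.toDual ℝ (Euc n)).symm (fderiv ℝ f x) := rfl
  rw [h2]
  exact (InnerProductSpace.toDual ℝ (Euc n)).symm.contDiff.comp h1

/-- The β-derivative of the nudged equilibrium `s_β`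
(solving `∇ₛE(s_β, θ) + β∇ℓ(s_β) = 0`) satisfies the adjoint equation
`∇ℓ(s₀) + ∇²ₛE(s₀, θ)·λ = 0`, hence `λ = −(∇²ₛE(s₀, θ))⁻¹∇ℓ(s₀)`. -/
theorem stmt_3 {n p : ℕ}
    (E : Euc n → Euc p → ℝ) (hE : ContDiff ℝ 2 (Function.uncurry E))
    (ℓ : Euc n → ℝ) (hℓ : ContDiff ℝ 2 ℓ)
    (θ : Euc p) (s : ℝ → Euc n) (hs : ContDiff ℝ 1 s)
    (ε : ℝ) (hε : 0 < ε)
    (hnudge : ∀ β ∈ Set.Ioo (-ε) ε,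
      gradient (fun s' => E s' θ) (s β) + β • gradient ℓ (s β) = 0)
    (H : Euc n →L[ℝ] Euc n)
    (hH : H = fderiv ℝ (fun s' => gradient (fun s'' => E s'' θ) s') (s 0))
    (Hinv : Euc n →L[ℝ] Euc n)
    (hHinv₁ : Hinv.comp H = ContinuousLinearMap.id ℝ (Euc n))
    (hHinv₂ : H.comp Hinv = ContinuousLinearMap.id ℝ (Euc n)) :
    gradient ℓ (s 0) + H (deriv s 0) = 0 ∧
      deriv s 0 = -(Hinv (gradient ℓ (s 0))) := by
  -- E(·, θ) is C²
  have hEθ : ContDiff ℝ 2 (fun s' => E s' θ) := by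
    have : ContDiff ℝ 2 (fun s' : Euc n => (s', θ)) :=
      contDiff_id.prodMk contDiff_const
    exact hE.comp this
  set G : Euc n → Euc n := fun s' => gradient (fun s'' => E s'' θ) s' with hG
  have hGc : ContDiff ℝ 1 G := contDiff_gradient_aux hEθ
  have hsd : Differentiable ℝ s := hs.differentiable one_ne_zero
  have hderiv_s : HasDerivAt s (deriv s 0) 0 := (hsd 0).hasDerivAt
  -- derivative of β ↦ G (s β) at 0
  have hGfd : HasFDerivAt G H (s 0) := by
    rw [hH]
    exact ((hGc.differentiable one_ne_zero) (s 0)).hasFDerivAt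
  have h1 : HasDerivAt (fun β => G (s β)) (H (deriv s 0)) 0 :=
    hGfd.comp_hasDerivAt 0 hderiv_s
  -- derivative of β ↦ β • gradient ℓ (s β) at 0
  have hgradℓ : Differentiable ℝ (gradient ℓ) :=
    (contDiff_gradient_aux hℓ).differentiable one_ne_zero
  have hg : HasDerivAt (fun β => gradient ℓ (s β))
      (fderiv ℝ (gradient ℓ) (s 0) (deriv s 0)) 0 :=
    (hgradℓ (s 0)).hasFDerivAt.comp_hasDerivAt 0 hderiv_s
  have h2 : HasDerivAt (fun β : ℝ => β • gradient ℓ (s β))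
      (gradient ℓ (s 0)) 0 := by
    have := (hasDerivAt_id' (x := (0 : ℝ))).smul hg
    rw [zero_smul, one_smul, zero_add] at this
    exact this
  -- the full map is eventually 0 near 0
  have hF : HasDerivAt (fun β => G (s β) + β • gradient ℓ (s β))
      (H (deriv s 0) + gradient ℓ (s 0)) 0 := h1.add h2
  have hmem : Set.Ioo (-ε) ε ∈ nhds (0 : ℝ) :=
    Ioo_mem_nhds (by linarith) hε
  have hev : (fun β => G (s β) + β • gradient ℓ (s β)) =ᶠ[nhds (0 : ℝ)]
      (fun _ => (0 : Euc n)) := by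
    filter_upwards [hmem] with β hβ
    exact hnudge β hβ
  have hF0 : HasDerivAt (fun β => G (s β) + β • gradient ℓ (s β)) 0 0 :=
    (hasDerivAt_const (0 : ℝ) (0 : Euc n)).congr_of_eventuallyEq hev
  have hkey : H (deriv s 0) + gradient ℓ (s 0) = 0 := hF.unique hF0
  have hkey' : gradient ℓ (s 0) + H (deriv s 0) = 0 := by
    rw [add_comm]; exact hkey
  refine ⟨hkey', ?_⟩
  have : H (deriv s 0) = -gradient ℓ (s 0) := by
    have := hkey
    linear_combination (norm := abel) this
  have h3 : Hinv (H (deriv s 0)) = Hinv (-gradient ℓ (s 0)) := by rw [this]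
  have h4 : Hinv (H (deriv s 0)) = deriv s 0 := by
    have := congrArg (fun T : Euc n →L[ℝ] Euc n => T (deriv s 0)) hHinv₁
    simpa using this
  rw [h4] at h3
  rw [h3, map_neg]
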